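/- For the Tribonacci palindromic prefixes w_n (directive sequence (012)^ω), |w_n| = (T_{n+3} + T_{n+1} - 3)/2, where T_n are the Tribonacci numbers with T_0 = 0, T_1 = 1, T_2 = 1 and T_n = T_{n-1} + T_{n-2} + T_{n-3}. -/

import Mathlib

open List
open Fin.NatCast

variable {A : Type*}

/-- `p` is the palindromic closure `(wa)⁺`: the shortest palindrome with `w ++ [a]` as prefix. -/
def IsPalClosure (w : List A) (a : A) (p : List A) : Prop :=
  p.Palindrome ∧ (w ++ [a]) <+: p ∧
    ∀ q : List A, q.Palindrome → (w ++ [a]) <+: q → p.length ≤ q.length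

/-- `v` occurs in `w` at position `i` (occupying positions `i, …, i + |v| - 1`). -/
def OccAt (w v : List A) (i : ℕ) : Prop :=
  i + v.length ≤ w.length ∧ (w.drop i).take v.length = v

/-- `Γ` is a string attractor of `w`: every nonempty factor of `w` has an occurrence
containing a position of `Γ`. -/
def IsAttractor (w : List A) (Γ : Set ℕ) : Prop :=
  (∀ k ∈ Γ, k < w.length) ∧
  ∀ v : List A, v ≠ [] → v <:+: w →
    ∃ i, OccAt w v i ∧ ∃ k ∈ Γ, i ≤ k ∧ k < i + v.length

/-- `m` is the maximal length of a palindromic prefix `p` of `v` such that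
`p ++ [a]` is a prefix of `v`. -/
def IsMaxPalPrefLen (v : List A) (a : A) (m : ℕ) : Prop :=
  (∃ p : List A, p.Palindrome ∧ (p ++ [a]) <+: v ∧ p.length = m) ∧
  ∀ p : List A, p.Palindrome → (p ++ [a]) <+: v → p.length ≤ m

/-- Overlap lemma: if `v ++ r` is a palindrome and `|r| < |v|`, then the suffix of `v`
of length `|v| - |r|` is a palindrome. -/
lemma overlap_pal {v r : List A} (hq : (v ++ r).Palindrome) (hlt : r.length < v.length) :
    ∃ s, s <:+ v ∧ s.Palindrome ∧ s.length = v.length - r.length := by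
  have hrev : r.reverse ++ v.reverse = v ++ r := by
    have h := hq.reverse_eq
    rwa [List.reverse_append] at h
  set k := v.length - r.length with hk
  have hvtake : v = r.reverse ++ v.reverse.take k := by
    have h1 : (v ++ r).take v.length = v := List.take_left
    rw [← hrev] at h1
    rw [List.take_append] at h1
    have h2 : List.take v.length r.reverse = r.reverse := by
      apply List.take_of_length_le
      simp; omega
    rw [h2] at h1
    simp only [List.length_reverse] at h1
    exact h1.symm
  refine ⟨v.reverse.take k, ⟨r.reverse, hvtake.symm⟩, List.Palindrome.of_reverse_eq ?_, ?_⟩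
  · have h3 : (v.reverse.take k).reverse = v.drop r.length := by
      rw [List.reverse_take, List.reverse_reverse, List.length_reverse]
      congr 1
      omega
    have h4 : v.drop r.length = v.reverse.take k := by
      conv_lhs => rw [hvtake]
      rw [show r.length = r.reverse.length from List.length_reverse.symm,
        List.drop_left]
    rw [h3, h4]
  · rw [List.length_take]
    simp; omega

/-- From a palindromic suffix of `w ++ [a]` of length at least `2` (where `w` is a palindrome),
extract a palindromic prefix `p` of `w` with `p ++ [a]` a prefix of `w`. -/
lemma suffix_pal_spec {w : List A} {a : A} (hw : w.Palindrome) {s : List A}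
    (hs : s <:+ w ++ [a]) (hp : s.Palindrome) (h2 : 2 ≤ s.length) :
    ∃ p : List A, p.Palindrome ∧ (p ++ [a]) <+: w ∧ p.length + 2 = s.length := by
  obtain ⟨t, ht⟩ := hs
  have hrev : s ++ t.reverse = a :: w := by
    have h := congrArg List.reverse ht
    rw [List.reverse_append, List.reverse_append, hp.reverse_eq, hw.reverse_eq] at h
    simpa using h
  cases s with
  | nil => simp at h2
  | cons b s' =>
    rw [List.cons_append] at hrev
    injection hrev with hb hrest
    subst hb
    have hne : s' ≠ [] := by
      intro h; subst h; simp at h2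
    obtain ⟨p, c, rfl⟩ : ∃ p c, s' = p ++ [c] :=
      ⟨s'.dropLast, s'.getLast hne, (List.dropLast_append_getLast hne).symm⟩
    have heq := hp.reverse_eq
    simp only [List.reverse_cons, List.reverse_append, List.reverse_singleton,
      List.singleton_append, List.cons_append, List.append_assoc] at heq
    injection heq with h1 h2'
    subst h1
    have hpp : p.reverse = p := by
      rw [List.nil_append] at h2'
      rwa [List.append_left_inj] at h2'
    exact ⟨p, List.Palindrome.of_reverse_eq hpp, ⟨t.reverse, hrest⟩, by simp⟩

/-- Construction: if `p` is a palindrome with `p ++ [a]` a prefix of the palindrome `w`,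
then there is a palindrome of length `2|w| - |p|` with prefix `w ++ [a]`. -/
lemma construct_pal {w p : List A} {a : A} (hw : w.Palindrome) (hp : p.Palindrome)
    (hpre : (p ++ [a]) <+: w) :
    ∃ q : List A, q.Palindrome ∧ (w ++ [a]) <+: q ∧ q.length + p.length = 2 * w.length := by
  obtain ⟨t, ht⟩ := hpre
  have h : List.reverse t ++ (a :: p) = w := by
    have h := hw.reverse_eq
    conv_lhs at h => rw [← ht]
    simpa [hp.reverse_eq] using h
  subst h
  refine ⟨((List.reverse t ++ (a :: p)) ++ [a]) ++ t,
    List.Palindrome.of_reverse_eq (by simp [hp.reverse_eq]),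
    List.prefix_append _ _, ?_⟩
  simp only [List.length_append, List.length_reverse, List.length_cons, List.length_singleton,
    List.length_nil]
  omega

/-- Lower bound for palindromes extending `w ++ [a]`. -/
lemma closure_lower {w q : List A} {a : A} (hw : w.Palindrome) (hq : q.Palindrome)
    (hqpre : (w ++ [a]) <+: q) :
    2 * w.length + 1 ≤ q.length ∨
      ∃ p : List A, p.Palindrome ∧ (p ++ [a]) <+: w ∧ q.length + p.length = 2 * w.length := by
  obtain ⟨r, rfl⟩ := hqpre
  have hv : (w ++ [a]).length = w.length + 1 := by simp
  by_cases hc : r.length < (w ++ [a]).length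
  · obtain ⟨s, hsuf, hspal, hslen⟩ := overlap_pal hq hc
    by_cases h2 : 2 ≤ s.length
    · obtain ⟨p, hpp, hppre, hplen⟩ := suffix_pal_spec hw hsuf hspal h2
      right
      refine ⟨p, hpp, hppre, ?_⟩
      simp only [List.length_append, List.length_singleton] at *
      omega
    · left
      simp only [List.length_append, List.length_singleton] at *
      omega
  · left
    simp only [List.length_append, List.length_singleton] at *
    omega

lemma closure_length_with {w pc : List A} {a : A} {M : ℕ} (hw : w.Palindrome)
    (hcl : IsPalClosure w a pc) (hmax : IsMaxPalPrefLen w a M) :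
    pc.length + M = 2 * w.length := by
  obtain ⟨⟨p, hp, hppre, hplen⟩, hub⟩ := hmax
  obtain ⟨q, hqpal, hqpre, hqlen⟩ := construct_pal hw hp hppre
  have h1 : pc.length ≤ q.length := hcl.2.2 q hqpal hqpre
  rcases closure_lower hw hcl.1 hcl.2.1 with h | ⟨p', hp', hppre', hlen'⟩
  · omega
  · have := hub p' hp' hppre'
    omega

lemma closure_length_without {w pc : List A} {a : A} (hw : w.Palindrome)
    (hcl : IsPalClosure w a pc)
    (hnone : ∀ p : List A, p.Palindrome → ¬(p ++ [a]) <+: w) :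
    pc.length = 2 * w.length + 1 := by
  have hqpal : ((w ++ [a]) ++ w.reverse).Palindrome :=
    List.Palindrome.of_reverse_eq (by simp)
  have h1 := hcl.2.2 _ hqpal (List.prefix_append _ _)
  simp only [List.length_append, List.length_singleton, List.length_reverse] at h1
  rcases closure_lower hw hcl.1 hcl.2.1 with h | ⟨p, hp, hppre, _⟩
  · omega
  · exact absurd hppre (hnone p hp)

theorem tribonacci_length (W : ℕ → List (Fin 3)) (δ : ℕ → Fin 3)
    (hδ : ∀ n, δ n = (n : Fin 3))
    (h0 : W 0 = []) (hstep : ∀ n, IsPalClosure (W n) (δ n) (W (n+1)))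
    (T : ℕ → ℕ) (hT0 : T 0 = 0) (hT1 : T 1 = 1) (hT2 : T 2 = 1)
    (hTrec : ∀ n, T (n + 3) = T (n + 2) + T (n + 1) + T n) :
    ∀ n, (W n).length = (T (n + 3) + T (n + 1) - 3) / 2 := by
  have hpal : ∀ n, (W n).Palindrome := by
    intro n
    cases n with
    | zero => rw [h0]; exact List.Palindrome.nil
    | succ m => exact (hstep m).1
  have hpre : ∀ n, (W n ++ [δ n]) <+: W (n+1) := fun n => (hstep n).2.1
  have hstep' : ∀ n, W n <+: W (n+1) := fun n => (List.prefix_append _ _).trans (hpre n)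
  have hchain : ∀ m n, m ≤ n → W m <+: W n := by
    intro m n h
    induction h with
    | refl => exact List.prefix_refl _
    | step _ ih => exact ih.trans (hstep' _)
  have hlen_lt : ∀ n, (W n).length < (W (n+1)).length := by
    intro n
    have := (hpre n).length_le
    simp only [List.length_append, List.length_singleton] at this
    omega
  have hlen_mono : ∀ m n, m ≤ n → (W m).length ≤ (W n).length :=
    fun m n h => (hchain m n h).length_le
  have hocc : ∀ j n, j < n → (W j ++ [δ j]) <+: W n :=
    fun j n h => (hpre j).trans (hchain _ _ h)
  have palpref : ∀ n p, p.Palindrome → p <+: W n → ∃ j, j ≤ n ∧ p = W j := by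
    intro n
    induction n with
    | zero =>
      intro p _ hp
      rw [h0] at hp
      exact ⟨0, le_refl _, by rw [List.prefix_nil.mp hp, h0]⟩
    | succ m ih =>
      intro p ppal hp
      by_cases hle : p.length ≤ (W m).length
      · obtain ⟨j, hj, hje⟩ := ih p ppal
          (List.prefix_of_prefix_length_le hp (hstep' m) hle)
        exact ⟨j, hj.trans (Nat.le_succ m), hje⟩
      · have h1 : (W m ++ [δ m]) <+: p :=
          List.prefix_of_prefix_length_le (hpre m) hp
            (by simp only [List.length_append, List.length_singleton]; omega)
      
        have h2 := (hstep m).2.2 p ppal h1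
        exact ⟨m+1, le_refl _, hp.eq_of_length (Nat.le_antisymm hp.length_le h2)⟩
  have hletter : ∀ j n (b c : Fin 3), (W j ++ [b]) <+: W n → (W j ++ [c]) <+: W n → b = c := by
    intro j n b c hb hc
    have h1 := List.prefix_of_prefix_length_le hb hc (by simp)
    have h2 := h1.eq_of_length (by simp)
    have h3 : [b] = [c] := by
      have := h2
      rwa [List.append_right_inj] at this
    simpa using h3
  have hdelta_mod : ∀ j n, δ j = δ n → j % 3 = n % 3 := by
    intro j n h
    rw [hδ, hδ] at h
    have := congrArg Fin.val h
    rwa [Fin.val_natCast, Fin.val_natCast] at this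
  have Scar : ∀ n p, p.Palindrome → (p ++ [δ n]) <+: W n →
      ∃ j, j < n ∧ p = W j ∧ j % 3 = n % 3 := by
    intro n p ppal hppre
    have hppre' : p <+: W n := (List.prefix_append _ _).trans hppre
    obtain ⟨j, hj, rfl⟩ := palpref n p ppal hppre'
    have hlen : (W j).length + 1 ≤ (W n).length := by
      have := hppre.length_le
      simpa using this
    have hjn : j < n := by
      rcases Nat.lt_or_ge j n with h | h
      · exact h
      · exfalso
        have := hlen_mono n j h
        omega
    have hd : δ j = δ n := hletter j n _ _ (hocc j n hjn) hppre
    exact ⟨j, hjn, rfl, hdelta_mod j n hd⟩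
  have hrec3 : ∀ m, (W (m+4)).length + (W m).length = 2 * (W (m+3)).length := by
    intro m
    have hdm : δ m = δ (m+3) := by
      rw [hδ, hδ]
      apply Fin.ext
      rw [Fin.val_natCast, Fin.val_natCast]
      omega
    have hmax : IsMaxPalPrefLen (W (m+3)) (δ (m+3)) (W m).length := by
      constructor
      · exact ⟨W m, hpal m, by rw [← hdm]; exact hocc m (m+3) (by omega), rfl⟩
      · intro p ppal hppre
        obtain ⟨j, hjlt, rfl, hjm⟩ := Scar (m+3) p ppal hppre
        exact hlen_mono j m (by omega)
    exact closure_length_with (hpal (m+3)) (hstep (m+3)) hmax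
  have hbase : ∀ n, n < 3 → (W (n+1)).length = 2 * (W n).length + 1 := by
    intro n hn
    apply closure_length_without (hpal n) (hstep n)
    intro p ppal hppre
    obtain ⟨j, hjlt, _, hjm⟩ := Scar n p ppal hppre
    omega
  have L0 : (W 0).length = 0 := by rw [h0]; rfl
  have L1 : (W 1).length = 1 := by rw [hbase 0 (by norm_num), L0]
  have L2 : (W 2).length = 3 := by rw [hbase 1 (by norm_num), L1]
  have L3 : (W 3).length = 7 := by rw [hbase 2 (by norm_num), L2]
  have T3 : T 3 = 2 := by have h1 := hTrec 0; norm_num at h1; omega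
  have T4 : T 4 = 4 := by have h1 := hTrec 0; have h2 := hTrec 1; norm_num at h1 h2; omega
  have T5 : T 5 = 7 := by
    have h1 := hTrec 0; have h2 := hTrec 1; have h3 := hTrec 2; norm_num at h1 h2 h3; omega
  have T6 : T 6 = 13 := by
    have h1 := hTrec 0; have h2 := hTrec 1; have h3 := hTrec 2; have h4 := hTrec 3
    norm_num at h1 h2 h3 h4; omega
  have key : ∀ n, 2 * (W n).length + 3 = T (n+3) + T (n+1) := by
    intro n
    induction n using Nat.strong_induction_on with
    | _ n ih =>
      match n, ih with
      | 0, _ => show 2 * (W 0).length + 3 = T 3 + T 1; omega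
      | 1, _ => show 2 * (W 1).length + 3 = T 4 + T 2; omega
      | 2, _ => show 2 * (W 2).length + 3 = T 5 + T 3; omega
      | 3, _ => show 2 * (W 3).length + 3 = T 6 + T 4; omega
      | (m+4), ih =>
        have A3 := ih (m+3) (by omega)
        have A0 := ih m (by omega)
        have R := hrec3 m
        have t0 := hTrec m
        have t1 := hTrec (m+1)
        have t2 := hTrec (m+2)
        have t3 := hTrec (m+3)
        have t4 := hTrec (m+4)
        simp only [Nat.add_assoc, Nat.reduceAdd] at A3 A0 t0 t1 t2 t3 t4 ⊢
        omega
  intro n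
  have := key n
  omega
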